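/- Let G = (A,B,C;E) be a bilaterally-complete tripartite graph with complete sides G[A∪B] and G[A∪C] and |A| = p, and let H(G) be its network graph. Then the minimum cardinality of an (s,t)-separator of H(G) equals τ△(G). -/

import Mathlib

open SimpleGraph

variable {V : Type*}

/-- The set of edges of a triangle, given by its vertex set `t`:
all unordered pairs of distinct vertices of `t`. -/
def triangleEdges (t : Finset V) : Set (Sym2 V) :=
  {e | ∃ u ∈ t, ∃ v ∈ t, u ≠ v ∧ e = s(u, v)}

/-- `E'` is a `𝒯`-transversal of `G`: a set of edges of `G` meeting every triangle of `G`. -/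
def IsTriTransversal (G : SimpleGraph V) (E' : Set (Sym2 V)) : Prop :=
  E' ⊆ G.edgeSet ∧ ∀ t : Finset V, G.IsNClique 3 t → ∃ e ∈ triangleEdges t, e ∈ E'

/-- `τ△ G`: the minimum cardinality of a `𝒯`-transversal of `G`. -/
noncomputable def triTransversalNum (G : SimpleGraph V) : ℕ :=
  sInf {n | ∃ E' : Set (Sym2 V), IsTriTransversal G E' ∧ E'.ncard = n}

/-- `P` is a packing in `G`: a set of triangles of `G` that are pairwise edge-disjoint. -/
def IsTriPacking (G : SimpleGraph V) (P : Set (Finset V)) : Prop :=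
  (∀ t ∈ P, G.IsNClique 3 t) ∧
    P.Pairwise fun t t' => Disjoint (triangleEdges t) (triangleEdges t')

/-- `ν△ G`: the maximum cardinality of a packing of triangles in `G`. -/
noncomputable def triPackingNum (G : SimpleGraph V) : ℕ :=
  sSup {n | ∃ P : Set (Finset V), IsTriPacking G P ∧ P.ncard = n}

/-- The set of edges of `G` with one endpoint in `M` and the other in `W`. -/
def edgesBetween (G : SimpleGraph V) (M W : Set V) : Set (Sym2 V) :=
  {e | e ∈ G.edgeSet ∧ ∃ u ∈ M, ∃ w ∈ W, e = s(u, w)}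

/-- `G` is tripartite with parts `A`, `B`, `C`: the vertex set is partitioned into
the three independent sets `A`, `B`, `C`. -/
def IsTripartition (G : SimpleGraph V) (A B C : Set V) : Prop :=
  A ∪ B ∪ C = Set.univ ∧ Disjoint A B ∧ Disjoint A C ∧ Disjoint B C ∧
    (∀ u ∈ A, ∀ v ∈ A, ¬G.Adj u v) ∧ (∀ u ∈ B, ∀ v ∈ B, ¬G.Adj u v) ∧
    (∀ u ∈ C, ∀ v ∈ C, ¬G.Adj u v)

/-- The side `G[X ∪ Y]` of a tripartite graph is a complete bipartite graph. -/
def CompleteSide (G : SimpleGraph V) (X Y : Set V) : Prop :=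
  ∀ x ∈ X, ∀ y ∈ Y, G.Adj x y

/-- `W` is a vertex cover of the subgraph edge-induced by the edge set `Y`. -/
def CoversEdges (W : Set V) (Y : Set (Sym2 V)) : Prop :=
  ∀ e ∈ Y, ∃ v ∈ W, v ∈ e

/-- `M` is a matching consisting of edges from the edge set `F`:
the edges of `M` are pairwise vertex-disjoint. -/
def IsMatchingIn (F : Set (Sym2 V)) (M : Set (Sym2 V)) : Prop :=
  M ⊆ F ∧ M.Pairwise fun e f => ∀ v, v ∈ e → v ∉ f
/-- The vertices of the network graph `H(G)`: a source, a sink, `p` copies of the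
`B`-side vertices, `p` copies of the `C`-side vertices, and one vertex for each
potential edge between `B` and `C`. -/
inductive NetVert (V : Type*) (p : ℕ) where
  | src : NetVert V p
  | snk : NetVert V p
  | bCopy (i : Fin p) (v : V) : NetVert V p
  | cCopy (i : Fin p) (v : V) : NetVert V p
  | mid (e : Sym2 V) : NetVert V p

/-- The arcs of the network graph `H(G)`: from the source to every copy of every
vertex of `B`; for every edge `e = uv ∈ E_BC` (`u ∈ B`, `v ∈ C`), from every copy of
`u` to the vertex corresponding to `e` and from that vertex to every copy of `v`;
and from every copy of every vertex of `C` to the sink. -/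
def netAdj (G : SimpleGraph V) (B C : Set V) (p : ℕ) :
    NetVert V p → NetVert V p → Prop
  | .src, .bCopy _ v => v ∈ B
  | .bCopy _ u, .mid e => u ∈ B ∧ e ∈ edgesBetween G B C ∧ u ∈ e
  | .mid e, .cCopy _ v => v ∈ C ∧ e ∈ edgesBetween G B C ∧ v ∈ e
  | .cCopy _ v, .snk => v ∈ C
  | _, _ => False

/-- The vertices of `H(G)` in `V_BC` corresponding to a set `S` of edges. -/
def midSet (S : Set (Sym2 V)) (p : ℕ) : Set (NetVert V p) :=
  {x | ∃ e ∈ S, x = NetVert.mid e}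

/-- The vertices of `H(G)` in `B_1 ∪ ⋯ ∪ B_p` that are copies of vertices in `S`. -/
def bCopySet (S : Set V) (p : ℕ) : Set (NetVert V p) :=
  {x | ∃ i : Fin p, ∃ v ∈ S, x = NetVert.bCopy i v}

/-- The vertices of `H(G)` in `C_1 ∪ ⋯ ∪ C_p` that are copies of vertices in `S`. -/
def cCopySet (S : Set V) (p : ℕ) : Set (NetVert V p) :=
  {x | ∃ i : Fin p, ∃ v ∈ S, x = NetVert.cCopy i v}

/-- `S` is an `(s,t)`-separator of the digraph with arc relation `Adj`: a set of
vertices distinct from `s` and `t` whose removal breaks all directed paths from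
`s` to `t`. -/
def IsSeparator {α : Type*} (Adj : α → α → Prop) (s t : α) (S : Set α) : Prop :=
  s ∉ S ∧ t ∉ S ∧
    ¬ Relation.ReflTransGen (fun u v => Adj u v ∧ u ∉ S ∧ v ∉ S) s t

section AuxNet

/-- Encoding of `NetVert` into a sum type, for finiteness. -/
private def netEncode {V : Type*} {p : ℕ} :
    NetVert V p → Bool ⊕ (Fin p × V) ⊕ (Fin p × V) ⊕ Sym2 V
  | .src => .inl true
  | .snk => .inl false
  | .bCopy i v => .inr (.inl (i, v))
  | .cCopy i v => .inr (.inr (.inl (i, v)))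
  | .mid e => .inr (.inr (.inr e))

instance netVertFinite {V : Type*} [Finite V] {p : ℕ} : Finite (NetVert V p) := by
  apply Finite.of_injective (netEncode (V := V) (p := p))
  intro a b h
  cases a <;> cases b <;> simp [netEncode] at h <;> simp [h]

end AuxNet

section AuxTri

variable [DecidableEq V] {G : SimpleGraph V} {A B C : Set V}

lemma triangle_struct (hpart : IsTripartition G A B C) {t : Finset V}
    (ht : G.IsNClique 3 t) :
    ∃ a b c, a ∈ A ∧ b ∈ B ∧ c ∈ C ∧ a ∈ t ∧ b ∈ t ∧ c ∈ t ∧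
      G.Adj a b ∧ G.Adj a c ∧ G.Adj b c ∧ ∀ u ∈ t, u = a ∨ u = b ∨ u = c := by
  obtain ⟨hcl, hcard⟩ := ht
  rw [Finset.card_eq_three] at hcard
  obtain ⟨x, y, z, hxy, hxz, hyz, ht3⟩ := hcard
  subst ht3
  have axy : G.Adj x y := hcl (by simp) (by simp) hxy
  have axz : G.Adj x z := hcl (by simp) (by simp) hxz
  have ayz : G.Adj y z := hcl (by simp) (by simp) hyz
  obtain ⟨hU, hDAB, hDAC, hDBC, hA, hB, hC⟩ := hpart
  have mem : ∀ v : V, v ∈ A ∨ v ∈ B ∨ v ∈ C := by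
    intro v
    have : v ∈ A ∪ B ∪ C := hU ▸ Set.mem_univ v
    simpa [Set.mem_union, or_assoc] using this
  have dBC : ∀ w, w ∈ B → w ∈ C → False := fun w hb hc =>
    Set.disjoint_left.mp hDBC hb hc
  have pickBC : ∀ u v, G.Adj u v → u ∉ A → v ∉ A →
      (u ∈ B ∧ v ∈ C) ∨ (u ∈ C ∧ v ∈ B) := by
    intro u v huv hu hv
    have h1 : ¬(u ∈ B ∧ v ∈ B) := fun h => hB u h.1 v h.2 huv
    have h2 : ¬(u ∈ C ∧ v ∈ C) := fun h => hC u h.1 v h.2 huv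
    rcases mem u with h | h | h <;> rcases mem v with h' | h' | h' <;> tauto
  have memt : ∀ u ∈ ({x, y, z} : Finset V), u = x ∨ u = y ∨ u = z := by
    intro u hu; simpa using hu
  by_cases hxA : x ∈ A
  · have hy : y ∉ A := fun h => hA x hxA y h axy
    have hz : z ∉ A := fun h => hA x hxA z h axz
    rcases pickBC y z ayz hy hz with ⟨hyB, hzC⟩ | ⟨hyC, hzB⟩
    · exact ⟨x, y, z, hxA, hyB, hzC, by simp, by simp, by simp, axy, axz, ayz,
        fun u hu => memt u hu⟩
    · exact ⟨x, z, y, hxA, hzB, hyC, by simp, by simp, by simp, axz, axy, ayz.symm,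
        fun u hu => (memt u hu).imp id Or.symm⟩
  · by_cases hyA : y ∈ A
    · have hx : x ∉ A := hxA
      have hz : z ∉ A := fun h => hA y hyA z h ayz
      rcases pickBC x z axz hx hz with ⟨hxB, hzC⟩ | ⟨hxC, hzB⟩
      · exact ⟨y, x, z, hyA, hxB, hzC, by simp, by simp, by simp, axy.symm, ayz, axz,
          fun u hu => by rcases memt u hu with h | h | h <;> tauto⟩
      · exact ⟨y, z, x, hyA, hzB, hxC, by simp, by simp, by simp, ayz, axy.symm, axz.symm,
          fun u hu => by rcases memt u hu with h | h | h <;> tauto⟩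
    · by_cases hzA : z ∈ A
      · rcases pickBC x y axy hxA hyA with ⟨hxB, hyC⟩ | ⟨hxC, hyB⟩
        · exact ⟨z, x, y, hzA, hxB, hyC, by simp, by simp, by simp, axz.symm, ayz.symm, axy,
            fun u hu => by rcases memt u hu with h | h | h <;> tauto⟩
        · exact ⟨z, y, x, hzA, hyB, hxC, by simp, by simp, by simp, ayz.symm, axz.symm, axy.symm,
            fun u hu => by rcases memt u hu with h | h | h <;> tauto⟩
      · exfalso
        rcases pickBC x y axy hxA hyA with ⟨h1, h2⟩ | ⟨h1, h2⟩ <;>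
          rcases pickBC x z axz hxA hzA with ⟨h3, h4⟩ | ⟨h3, h4⟩ <;>
          rcases pickBC y z ayz hyA hzA with ⟨h5, h6⟩ | ⟨h5, h6⟩ <;>
          [skip; skip; skip; skip; skip; skip; skip; skip] <;>
          first
            | exact dBC _ h1 h3
            | exact dBC _ h3 h1
            | exact dBC _ h2 h5
            | exact dBC _ h5 h2
            | exact dBC _ h4 h6
            | exact dBC _ h6 h4

lemma clique_of (hpart : IsTripartition G A B C) (hAB : CompleteSide G A B)
    (hAC : CompleteSide G A C) {a b c : V} (ha : a ∈ A) (hb : b ∈ B) (hc : c ∈ C)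
    (hbc : G.Adj b c) : G.IsNClique 3 {a, b, c} := by
  rw [SimpleGraph.is3Clique_triple_iff]
  exact ⟨hAB a ha b hb, hAC a ha c hc, hbc⟩

lemma mem_EBC {b c : V} (hb : b ∈ B) (hc : c ∈ C) (h : G.Adj b c) :
    s(b, c) ∈ edgesBetween G B C :=
  ⟨G.mem_edgeSet.2 h, b, hb, c, hc, rfl⟩

lemma EBC_elim {e : Sym2 V} (he : e ∈ edgesBetween G B C) :
    ∃ b c, b ∈ B ∧ c ∈ C ∧ G.Adj b c ∧ e = s(b, c) := by
  obtain ⟨hes, u, hu, w, hw, rfl⟩ := he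
  exact ⟨u, w, hu, hw, G.mem_edgeSet.1 hes, rfl⟩

end AuxTri
section AuxPath

variable {G : SimpleGraph V} {A B C : Set V} {p : ℕ}

lemma path_extract {S : Set (NetVert V p)}
    (h : Relation.ReflTransGen
      (fun u v => netAdj G B C p u v ∧ u ∉ S ∧ v ∉ S) NetVert.src NetVert.snk) :
    ∃ e ∈ edgesBetween G B C, NetVert.mid e ∉ S ∧
      (∃ b, b ∈ B ∧ b ∈ e ∧ ∃ i : Fin p, NetVert.bCopy i b ∉ S) ∧
      (∃ c, c ∈ C ∧ c ∈ e ∧ ∃ j : Fin p, NetVert.cCopy j c ∉ S) := by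
  rcases h.cases_head with heq | ⟨x, ⟨hadj1, _, hx1⟩, h1⟩
  · exact absurd heq (by simp)
  cases x with
  | bCopy i b =>
    rcases h1.cases_head with heq | ⟨y, ⟨hadj2, _, hy1⟩, h2⟩
    · exact absurd heq (by simp)
    cases y with
    | mid e =>
      obtain ⟨hbB, heBC, hbe⟩ := hadj2
      rcases h2.cases_head with heq | ⟨z, ⟨hadj3, _, hz1⟩, h3⟩
      · exact absurd heq (by simp)
      cases z with
      | cCopy j c =>
        obtain ⟨hcC, _, hce⟩ := hadj3
        exact ⟨e, heBC, hy1, ⟨b, hbB, hbe, i, hx1⟩, ⟨c, hcC, hce, j, hz1⟩⟩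
      | _ => simp [netAdj] at hadj3
    | _ => simp [netAdj] at hadj2
  | _ => simp [netAdj] at hadj1

lemma path_build {S : Set (NetVert V p)} {e : Sym2 V} {b c : V} (i j : Fin p)
    (hb : b ∈ B) (hc : c ∈ C) (he : e ∈ edgesBetween G B C) (hbe : b ∈ e) (hce : c ∈ e)
    (hs : NetVert.src ∉ S) (ht : NetVert.snk ∉ S) (h1 : NetVert.bCopy i b ∉ S)
    (h2 : NetVert.mid e ∉ S) (h3 : NetVert.cCopy j c ∉ S) :
    Relation.ReflTransGen
      (fun u v => netAdj G B C p u v ∧ u ∉ S ∧ v ∉ S) NetVert.src NetVert.snk := by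
  refine .head ⟨?_, hs, h1⟩ (.head ⟨?_, h1, h2⟩ (.head ⟨?_, h2, h3⟩
    (.head ⟨?_, h3, ht⟩ .refl)))
  · exact hb
  · exact ⟨hb, he, hbe⟩
  · exact ⟨hc, he, hce⟩
  · exact hc

end AuxPath

section AuxCard

variable [Fintype V] {p : ℕ}

lemma ncard_prod' {α β : Type*} [Fintype α] [Fintype β] (s : Set α) (t : Set β) :
    (s ×ˢ t).ncard = s.ncard * t.ncard := by
  classical
  rw [Set.ncard_eq_toFinset_card', Set.ncard_eq_toFinset_card',
    Set.ncard_eq_toFinset_card', Set.toFinset_prod, Finset.card_product]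

lemma midSet_eq (F : Set (Sym2 V)) : midSet F p = NetVert.mid '' F := by
  ext x; simp [midSet, eq_comm, Set.mem_image]

lemma bCopySet_eq (X : Set V) :
    bCopySet X p = (fun q : Fin p × V => NetVert.bCopy q.1 q.2) ''
      ((Set.univ : Set (Fin p)) ×ˢ X) := by
  ext x
  simp only [bCopySet, Set.mem_setOf_eq, Set.mem_image, Set.mem_prod, Set.mem_univ,
    true_and, Prod.exists]
  constructor
  · rintro ⟨i, v, hv, rfl⟩; exact ⟨i, v, hv, rfl⟩
  · rintro ⟨i, v, hv, rfl⟩; exact ⟨i, v, hv, rfl⟩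

lemma cCopySet_eq (X : Set V) :
    cCopySet X p = (fun q : Fin p × V => NetVert.cCopy q.1 q.2) ''
      ((Set.univ : Set (Fin p)) ×ˢ X) := by
  ext x
  simp only [cCopySet, Set.mem_setOf_eq, Set.mem_image, Set.mem_prod, Set.mem_univ,
    true_and, Prod.exists]
  constructor
  · rintro ⟨i, v, hv, rfl⟩; exact ⟨i, v, hv, rfl⟩
  · rintro ⟨i, v, hv, rfl⟩; exact ⟨i, v, hv, rfl⟩

lemma midSet_ncard (F : Set (Sym2 V)) : (midSet F p).ncard = F.ncard := by
  rw [midSet_eq]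
  exact Set.ncard_image_of_injective _ (fun a b h => by injection h)

lemma bCopySet_ncard (X : Set V) : (bCopySet X p).ncard = p * X.ncard := by
  rw [bCopySet_eq, Set.ncard_image_of_injective _
    (fun a b h => by cases a; cases b; injection h with h1 h2; simp_all),
    ncard_prod', Set.ncard_univ, Nat.card_eq_fintype_card, Fintype.card_fin]

lemma cCopySet_ncard (X : Set V) : (cCopySet X p).ncard = p * X.ncard := by
  rw [cCopySet_eq, Set.ncard_image_of_injective _
    (fun a b h => by cases a; cases b; injection h with h1 h2; simp_all),
    ncard_prod', Set.ncard_univ, Nat.card_eq_fintype_card, Fintype.card_fin]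

lemma card_structured (F : Set (Sym2 V)) (X Y : Set V) :
    (midSet F p ∪ (bCopySet X p ∪ cCopySet Y p)).ncard
      = F.ncard + (p * X.ncard + p * Y.ncard) := by
  have d1 : Disjoint (bCopySet X p) (cCopySet Y (V := V) p) := by
    rw [Set.disjoint_left]
    rintro x ⟨i, v, _, rfl⟩ ⟨j, w, _, h⟩
    exact nomatch h
  have d2 : Disjoint (midSet F p) (bCopySet X p ∪ cCopySet Y (V := V) p) := by
    rw [Set.disjoint_left]
    rintro x ⟨e, _, rfl⟩ (⟨i, v, _, h⟩ | ⟨i, v, _, h⟩) <;> exact nomatch h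
  rw [Set.ncard_union_eq d2, Set.ncard_union_eq d1, midSet_ncard, bCopySet_ncard,
    cCopySet_ncard]

end AuxCard
section AuxMin

variable [Fintype V] {G : SimpleGraph V} {A B C : Set V}

lemma min_bound (hpart : IsTripartition G A B C) (E' : Set (Sym2 V))
    (hA : A.Nonempty) :
    ∃ a ∈ A, A.ncard * {w | w ∈ B ∪ C ∧ s(a, w) ∈ E'}.ncard
      ≤ (E' \ edgesBetween G B C).ncard := by
  classical
  obtain ⟨hU, hDAB, hDAC, hDBC, hA3, hB3, hC3⟩ := hpart
  set N : V → Set V := fun a => {w | w ∈ B ∪ C ∧ s(a, w) ∈ E'} with hN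
  have hAnotBC : ∀ a ∈ A, a ∉ B ∪ C := by
    rintro a ha (h | h)
    · exact Set.disjoint_left.mp hDAB ha h
    · exact Set.disjoint_left.mp hDAC ha h
  set f : V → Finset (Sym2 V) := fun a => (N a).toFinset.image (fun w => s(a, w)) with hf
  have hcardf : ∀ a ∈ A, (f a).card = (N a).ncard := by
    intro a ha
    rw [hf, Finset.card_image_of_injOn, Set.ncard_eq_toFinset_card']
    intro w hw w' hw' hww
    simp only [Finset.mem_coe, Set.mem_toFinset] at hw hw'
    rcases (Sym2.eq_iff).1 hww with ⟨_, h⟩ | ⟨h1, h2⟩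
    · exact h
    · exact absurd (h1 ▸ hw'.1) (hAnotBC a ha)
  have hdisj : ∀ a ∈ A.toFinset, ∀ a' ∈ A.toFinset, a ≠ a' → Disjoint (f a) (f a') := by
    intro a ha a' ha' hne
    simp only [Set.mem_toFinset] at ha ha'
    rw [Finset.disjoint_left]
    intro e he he'
    simp only [hf, Finset.mem_image, Set.mem_toFinset] at he he'
    obtain ⟨w, hw, rfl⟩ := he
    obtain ⟨w', hw', heq⟩ := he'
    rcases (Sym2.eq_iff).1 heq with ⟨h1, _⟩ | ⟨h1, h2⟩
    · exact hne (h1.symm)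
    · exact hAnotBC a ha (h2 ▸ hw'.1)
  have hsub : A.toFinset.biUnion f ⊆ (E' \ edgesBetween G B C).toFinset := by
    intro e he
    simp only [Finset.mem_biUnion, Set.mem_toFinset] at he ⊢
    obtain ⟨a, ha, he⟩ := he
    simp only [hf, Finset.mem_image, Set.mem_toFinset] at he
    obtain ⟨w, hw, rfl⟩ := he
    refine ⟨hw.2, ?_⟩
    rintro ⟨-, u, hu, v, hv, heq⟩
    rcases (Sym2.eq_iff).1 heq with ⟨h1, -⟩ | ⟨h1, -⟩
    · exact hAnotBC a ha (Set.mem_union_left _ (h1 ▸ hu))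
    · exact hAnotBC a ha (Set.mem_union_right _ (h1 ▸ hv))
  have hsum : ∑ a ∈ A.toFinset, (f a).card ≤ (E' \ edgesBetween G B C).ncard := by
    rw [← Finset.card_biUnion hdisj, Set.ncard_eq_toFinset_card']
    exact Finset.card_le_card hsub
  have hAne : A.toFinset.Nonempty := by
    obtain ⟨a, ha⟩ := hA; exact ⟨a, Set.mem_toFinset.2 ha⟩
  obtain ⟨a₀, ha₀, hmin⟩ := A.toFinset.exists_min_image (fun a => (N a).ncard) hAne
  refine ⟨a₀, Set.mem_toFinset.1 ha₀, ?_⟩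
  calc A.ncard * (N a₀).ncard = ∑ _a ∈ A.toFinset, (N a₀).ncard := by
        rw [Finset.sum_const, smul_eq_mul, Set.ncard_eq_toFinset_card']
    _ ≤ ∑ a ∈ A.toFinset, (N a).ncard := Finset.sum_le_sum (fun a ha => hmin a ha)
    _ = ∑ a ∈ A.toFinset, (f a).card := by
        refine Finset.sum_congr rfl (fun a ha => ?_)
        exact (hcardf a (Set.mem_toFinset.1 ha)).symm
    _ ≤ _ := hsum

end AuxMin
section AuxDir

variable [Fintype V] {G : SimpleGraph V} {A B C : Set V} {p : ℕ}

lemma exists_separator_le (hpart : IsTripartition G A B C)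
    (hAB : CompleteSide G A B) (hAC : CompleteSide G A C) (hp : A.ncard = p)
    (E' : Set (Sym2 V)) (hE' : IsTriTransversal G E') :
    ∃ S : Set (NetVert V p),
      IsSeparator (netAdj G B C p) NetVert.src NetVert.snk S ∧ S.ncard ≤ E'.ncard := by
  classical
  obtain ⟨hsub, hhit⟩ := hE'
  rcases Nat.eq_zero_or_pos p with hp0 | hppos
  · subst hp0
    refine ⟨∅, ⟨Set.notMem_empty _, Set.notMem_empty _, ?_⟩, by simp⟩
    intro h
    obtain ⟨e, -, -, ⟨b, -, -, i, -⟩, -⟩ := path_extract h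
    exact i.elim0
  · have hA : A.Nonempty := Set.nonempty_of_ncard_ne_zero (by omega)
    obtain ⟨a₀, ha₀, hbound⟩ := min_bound hpart E' hA
    set W : Set V := {w | w ∈ B ∪ C ∧ s(a₀, w) ∈ E'} with hW
    set F : Set (Sym2 V) := E' ∩ edgesBetween G B C with hF
    set S : Set (NetVert V p) :=
      midSet F p ∪ (bCopySet (W ∩ B) p ∪ cCopySet (W ∩ C) p) with hS
    have hdBC : Disjoint B C := hpart.2.2.2.1
    refine ⟨S, ⟨?_, ?_, ?_⟩, ?_⟩
    · rintro (⟨e, -, h⟩ | (⟨i, v, -, h⟩ | ⟨i, v, -, h⟩)) <;> exact nomatch h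
    · rintro (⟨e, -, h⟩ | (⟨i, v, -, h⟩ | ⟨i, v, -, h⟩)) <;> exact nomatch h
    · intro h
      obtain ⟨e, heBC, hmid, ⟨b, hbB, hbe, i, hbS⟩, ⟨c, hcC, hce, j, hcS⟩⟩ :=
        path_extract h
      have heF : e ∉ F := fun hFe => hmid (Or.inl ⟨e, hFe, rfl⟩)
      obtain ⟨u, w, huB, hwC, huw, rfl⟩ := EBC_elim heBC
      have hbu : b = u := by
        rcases Sym2.mem_iff.1 hbe with h' | h'
        · exact h'
        · exact absurd (h' ▸ hbB) (fun hh => Set.disjoint_left.mp hdBC hh hwC)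
      have hcw : c = w := by
        rcases Sym2.mem_iff.1 hce with h' | h'
        · exact absurd (h' ▸ hcC) (fun hh => Set.disjoint_left.mp hdBC huB hh)
        · exact h'
      subst hbu; subst hcw
      have k1 : s(a₀, b) ∉ E' := fun hmem =>
        hbS (Or.inr (Or.inl ⟨i, b, ⟨⟨Or.inl huB, hmem⟩, huB⟩, rfl⟩))
      have k2 : s(a₀, c) ∉ E' := fun hmem =>
        hcS (Or.inr (Or.inr ⟨j, c, ⟨⟨Or.inr hwC, hmem⟩, hwC⟩, rfl⟩))
      have k3 : s(b, c) ∉ E' := fun hmem => heF ⟨hmem, heBC⟩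
      obtain ⟨f, hfTri, hfE⟩ := hhit {a₀, b, c}
        (clique_of hpart hAB hAC ha₀ huB hwC (G.mem_edgeSet.1 heBC.1))
      obtain ⟨x, hx, y, hy, hxy, rfl⟩ := hfTri
      have hx' : x = a₀ ∨ x = b ∨ x = c := by simpa using hx
      have hy' : y = a₀ ∨ y = b ∨ y = c := by simpa using hy
      rcases hx' with rfl | rfl | rfl <;> rcases hy' with rfl | rfl | rfl <;>
        first
          | exact hxy rfl
          | exact k1 hfE
          | exact k2 hfE
          | exact k3 hfE
          | (rw [Sym2.eq_swap] at hfE;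
             first | exact k1 hfE | exact k2 hfE | exact k3 hfE)
    · have hWsplit : (W ∩ B).ncard + (W ∩ C).ncard = W.ncard := by
        have hu : (W ∩ B) ∪ (W ∩ C) = W := by
          ext w'
          simp only [Set.mem_union, Set.mem_inter_iff, hW, Set.mem_setOf_eq]
          constructor
          · rintro (⟨h1, -⟩ | ⟨h1, -⟩) <;> exact h1
          · rintro ⟨h1 | h1, h2⟩
            · exact Or.inl ⟨⟨Or.inl h1, h2⟩, h1⟩
            · exact Or.inr ⟨⟨Or.inr h1, h2⟩, h1⟩
        have hd : Disjoint (W ∩ B) (W ∩ C) :=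
          hdBC.mono Set.inter_subset_right Set.inter_subset_right
        have h2 := Set.ncard_union_eq hd
        rw [hu] at h2
        exact h2.symm
      have hEsplit : F.ncard + (E' \ edgesBetween G B C).ncard = E'.ncard := by
        have hu : F ∪ (E' \ edgesBetween G B C) = E' := by
          ext e
          simp only [Set.mem_union, Set.mem_inter_iff, hF, Set.mem_diff]
          tauto
        have hd : Disjoint F (E' \ edgesBetween G B C) := by
          rw [Set.disjoint_left]
          intro e heF heD
          exact heD.2 heF.2
        have h2 := Set.ncard_union_eq hd
        rw [hu] at h2
        exact h2.symm
      rw [hS, card_structured, ← Nat.mul_add, hWsplit]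
      rw [hp] at hbound
      omega

end AuxDir
lemma exists_transversal_le [Fintype V] {G : SimpleGraph V} {A B C : Set V} {p : ℕ}
    (hpart : IsTripartition G A B C)
    (hAB : CompleteSide G A B) (hAC : CompleteSide G A C) (hp : A.ncard = p)
    (S : Set (NetVert V p))
    (hS : IsSeparator (netAdj G B C p) NetVert.src NetVert.snk S) :
    ∃ E' : Set (Sym2 V), IsTriTransversal G E' ∧ E'.ncard ≤ S.ncard := by
  classical
  obtain ⟨hsrc, hsnk, hpath⟩ := hS
  set F : Set (Sym2 V) := {e ∈ edgesBetween G B C | NetVert.mid e ∈ S} with hF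
  set WB : Set V := {b ∈ B | ∀ i : Fin p, NetVert.bCopy i b ∈ S} with hWB
  set WC : Set V := {c ∈ C | ∀ i : Fin p, NetVert.cCopy i c ∈ S} with hWC
  set E' : Set (Sym2 V) :=
    F ∪ (fun q : V × V => s(q.1, q.2)) '' (A ×ˢ (WB ∪ WC)) with hE'
  have cover : ∀ b ∈ B, ∀ c ∈ C, G.Adj b c → s(b, c) ∈ F ∨ b ∈ WB ∨ c ∈ WC := by
    intro b hb c hc hadj
    by_contra hcon
    push_neg at hcon
    obtain ⟨h1, h2, h3⟩ := hcon
    have heBC := mem_EBC hb hc hadj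
    have hmid : NetVert.mid s(b, c) ∉ S := fun hm => h1 ⟨heBC, hm⟩
    have hbi : ∃ i, NetVert.bCopy i b ∉ S := by
      by_contra hbi; push_neg at hbi; exact h2 ⟨hb, hbi⟩
    have hcj : ∃ j, NetVert.cCopy j c ∉ S := by
      by_contra hcj; push_neg at hcj; exact h3 ⟨hc, hcj⟩
    obtain ⟨i, hi⟩ := hbi
    obtain ⟨j, hj⟩ := hcj
    exact hpath (path_build i j hb hc heBC (by simp) (by simp) hsrc hsnk hi hmid hj)
  refine ⟨E', ⟨?_, ?_⟩, ?_⟩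
  · rintro e (⟨heBC, -⟩ | ⟨⟨a, w⟩, ⟨haA, hw⟩, rfl⟩)
    · exact heBC.1
    · rcases hw with ⟨hwB, -⟩ | ⟨hwC, -⟩
      · exact G.mem_edgeSet.2 (hAB a haA w hwB)
      · exact G.mem_edgeSet.2 (hAC a haA w hwC)
  · intro t ht
    obtain ⟨a, b, c, haA, hbB, hcC, hat, hbt, hct, hab, hac, hbc, -⟩ :=
      triangle_struct hpart ht
    rcases cover b hbB c hcC hbc with hFe | hb' | hc'
    · exact ⟨s(b, c), ⟨b, hbt, c, hct, hbc.ne, rfl⟩, Or.inl hFe⟩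
    · exact ⟨s(a, b), ⟨a, hat, b, hbt, hab.ne, rfl⟩,
        Or.inr ⟨(a, b), ⟨haA, Or.inl hb'⟩, rfl⟩⟩
    · exact ⟨s(a, c), ⟨a, hat, c, hct, hac.ne, rfl⟩,
        Or.inr ⟨(a, c), ⟨haA, Or.inr hc'⟩, rfl⟩⟩
  · have h1 : E'.ncard ≤ F.ncard + (p * WB.ncard + p * WC.ncard) := by
      calc E'.ncard
          ≤ F.ncard + ((fun q : V × V => s(q.1, q.2)) '' (A ×ˢ (WB ∪ WC))).ncard :=
            Set.ncard_union_le _ _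
        _ ≤ F.ncard + (A ×ˢ (WB ∪ WC)).ncard := by
            exact Nat.add_le_add_left (Set.ncard_image_le (Set.toFinite _)) _
        _ = F.ncard + p * (WB ∪ WC).ncard := by rw [ncard_prod', hp]
        _ ≤ F.ncard + p * (WB.ncard + WC.ncard) := by
            exact Nat.add_le_add_left
              (Nat.mul_le_mul_left p (Set.ncard_union_le WB WC)) _
        _ = F.ncard + (p * WB.ncard + p * WC.ncard) := by ring
    have h2 : F.ncard + (p * WB.ncard + p * WC.ncard) ≤ S.ncard := by
      rw [← card_structured F WB WC]
      apply Set.ncard_le_ncard _ (Set.toFinite S)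
      rintro x (⟨e, ⟨-, heS⟩, rfl⟩ | (⟨i, v, hv, rfl⟩ | ⟨i, v, hv, rfl⟩))
      · exact heS
      · exact hv.2 i
      · exact hv.2 i
    exact h1.trans h2
/-- The minimum cardinality of an `(s,t)`-separator of the network graph `H(G)` of a
bilaterally-complete tripartite graph `G` equals `τ△(G)`. -/
theorem min_separator_eq_tau [Fintype V] (G : SimpleGraph V)
    (A B C : Set V) (hpart : IsTripartition G A B C)
    (hAB : CompleteSide G A B) (hAC : CompleteSide G A C)
    (p : ℕ) (hp : A.ncard = p) :
    sInf {n : ℕ | ∃ S : Set (NetVert V p),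
        IsSeparator (netAdj G B C p) NetVert.src NetVert.snk S ∧ S.ncard = n} =
      triTransversalNum G := by
  classical
  set SepSet : Set ℕ := {n : ℕ | ∃ S : Set (NetVert V p),
      IsSeparator (netAdj G B C p) NetVert.src NetVert.snk S ∧ S.ncard = n} with hSepSet
  set TransSet : Set ℕ :=
    {n | ∃ E' : Set (Sym2 V), IsTriTransversal G E' ∧ E'.ncard = n} with hTransSet
  have hTne : TransSet.Nonempty := by
    refine ⟨G.edgeSet.ncard, G.edgeSet, ⟨subset_rfl, ?_⟩, rfl⟩
    intro t ht
    obtain ⟨a, b, c, -, -, -, -, hbt, hct, -, -, hbc, -⟩ := triangle_struct hpart ht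
    exact ⟨s(b, c), ⟨b, hbt, c, hct, hbc.ne, rfl⟩, G.mem_edgeSet.2 hbc⟩
  have hSne : SepSet.Nonempty := by
    refine ⟨(midSet (edgesBetween G B C) p).ncard,
      midSet (edgesBetween G B C) p, ⟨?_, ?_, ?_⟩, rfl⟩
    · rintro ⟨e, -, h⟩; exact nomatch h
    · rintro ⟨e, -, h⟩; exact nomatch h
    · intro h
      obtain ⟨e, heBC, hmid, -, -⟩ := path_extract h
      exact hmid ⟨e, heBC, rfl⟩
  have hτ : triTransversalNum G = sInf TransSet := rfl
  apply le_antisymm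
  · have hmem : sInf TransSet ∈ TransSet := Nat.sInf_mem hTne
    obtain ⟨E', hE', hcard⟩ := hmem
    obtain ⟨S, hSsep, hle⟩ := exists_separator_le hpart hAB hAC hp E' hE'
    rw [hτ]
    exact le_trans (Nat.sInf_le ⟨S, hSsep, rfl⟩) (hcard ▸ hle)
  · have hmem : sInf SepSet ∈ SepSet := Nat.sInf_mem hSne
    obtain ⟨S, hSsep, hcard⟩ := hmem
    obtain ⟨E', hE', hle⟩ := exists_transversal_le hpart hAB hAC hp S hSsep
    rw [hτ]
    exact le_trans (Nat.sInf_le ⟨E', hE', rfl⟩) (hcard ▸ hle)
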